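/- For every integer $d_B \geq 2$ and every $\varepsilon \in (0, 1 - 1/d_B]$, there exist a finite alphabet $\mathcal{X}$, probability distributions $r, s$ on $\mathcal{X}$, and families of density matrices $\{\rho_B^x\}_x, \{\sigma_B^x\}_x$ on $\mathbb{C}^{d_B}$ such that the classical--quantum states $\rho_{XB} = \sum_x r(x)|x\rangle\langle x| \otimes \rho_B^x$ and $\sigma_{XB} = \sum_x s(x)|x\rangle\langle x| \otimes \sigma_B^x$ satisfy $\tfrac{1}{2}\|\rho_{XB} - \sigma_{XB}\|_1 \leq \varepsilon$ and $|H(B|X)_\rho - H(B|X)_\sigma| = \varepsilon \log_2(d_B - 1) + h_2(\varepsilon)$. -/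

import Mathlib

open scoped BigOperators ComplexOrder

noncomputable def traceNorm {n : Type*} [Fintype n] [DecidableEq n]
    (A : Matrix n n ℂ) : ℝ :=
  (((Matrix.posSemidef_conjTranspose_mul_self A).1.eigenvectorUnitary.1 *
      Matrix.diagonal (((↑) : ℝ → ℂ) ∘ Real.sqrt ∘ (Matrix.posSemidef_conjTranspose_mul_self A).1.eigenvalues) *
      (star (Matrix.posSemidef_conjTranspose_mul_self A).1.eigenvectorUnitary : Matrix n n ℂ)).trace).re

def IsDensityMatrix {n : Type*} [Fintype n] [DecidableEq n]
    (ρ : Matrix n n ℂ) : Prop :=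
  ρ.PosSemidef ∧ ρ.trace = 1

noncomputable def vNEntropy {n : Type*} [Fintype n] [DecidableEq n]
    (ρ : Matrix n n ℂ) : ℝ :=
  if h : ρ.IsHermitian then -∑ i, h.eigenvalues i * Real.logb 2 (h.eigenvalues i) else 0

noncomputable def binEntropy (ε : ℝ) : ℝ :=
  -ε * Real.logb 2 ε - (1 - ε) * Real.logb 2 (1 - ε)

noncomputable def cqState {𝓧 : Type*} {d : ℕ} [DecidableEq 𝓧] (r : 𝓧 → ℝ)
    (ρ : 𝓧 → Matrix (Fin d) (Fin d) ℂ) :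
    Matrix (𝓧 × Fin d) (𝓧 × Fin d) ℂ :=
  Matrix.of fun p q => if p.1 = q.1 then (r p.1 : ℂ) * ρ p.1 p.2 q.2 else 0

open Polynomial Matrix in
lemma my_charpoly_conj {n : Type*} [Fintype n] [DecidableEq n]
    (U : Matrix.unitaryGroup n ℂ) (A : Matrix n n ℂ) :
    (star (U : Matrix n n ℂ) * A * (U : Matrix n n ℂ)).charpoly = A.charpoly := by
  have hmap : ∀ (X Y : Matrix n n ℂ), (X * Y).map (C : ℂ →+* ℂ[X]) = X.map C * Y.map C :=
    fun X Y => Matrix.map_mul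
  have hUU : (star (U : Matrix n n ℂ)) * (U : Matrix n n ℂ) = 1 :=
    Matrix.UnitaryGroup.star_mul_self U
  have hUU' : (U : Matrix n n ℂ) * star (U : Matrix n n ℂ) = 1 :=
    (Unitary.mem_iff.mp U.2).2
  have h1 : charmatrix (star (U : Matrix n n ℂ) * A * (U : Matrix n n ℂ))
      = (star (U : Matrix n n ℂ)).map C * charmatrix A * (U : Matrix n n ℂ).map C := by
    rw [charmatrix, charmatrix, Matrix.mul_sub, Matrix.sub_mul]
    congr 1
    · rw [← ((Matrix.scalar_commute (X : ℂ[X]) (Commute.all X)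
        ((star (U : Matrix n n ℂ)).map C)).eq), mul_assoc, ← hmap, hUU]
      simp
    · simp only [RingHom.mapMatrix_apply, ← hmap]
  rw [Matrix.charpoly, Matrix.charpoly, h1, Matrix.det_mul, Matrix.det_mul,
    mul_comm, ← mul_assoc, ← Matrix.det_mul, ← hmap, hUU']
  simp

open Polynomial Matrix in
lemma my_eig_sum {n : Type*} [Fintype n] [DecidableEq n] [LinearOrder n] {w : n → ℝ}
    (h : (Matrix.diagonal (fun i => (w i : ℂ))).IsHermitian) (f : ℝ → ℝ) :
    ∑ i, f (h.eigenvalues i) = ∑ i, f (w i) := by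
  set A := Matrix.diagonal (fun i => (w i : ℂ)) with hA
  have h1 : A.charpoly = ∏ i, (X - C ((h.eigenvalues i : ℝ) : ℂ)) := by
    calc A.charpoly
        = ((star (h.eigenvectorUnitary : Matrix n n ℂ)) * A *
            (h.eigenvectorUnitary : Matrix n n ℂ)).charpoly :=
          (my_charpoly_conj _ _).symm
      _ = (Matrix.diagonal (RCLike.ofReal ∘ h.eigenvalues)).charpoly := by
          rw [← h.conjStarAlgAut_star_eigenvectorUnitary, Unitary.conjStarAlgAut_apply, Unitary.coe_star, star_star]
      _ = ∏ i, (X - C ((h.eigenvalues i : ℝ) : ℂ)) := by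
          rw [charpoly_of_upperTriangular _ (blockTriangular_diagonal _)]
          simp
  have h3 : A.charpoly = ∏ i, ((X : ℂ[X]) - C ((w i : ℂ))) := by
    rw [charpoly_of_upperTriangular A (blockTriangular_diagonal _)]
    simp [hA]
  have h4 : (Finset.univ.val.map (fun i => ((h.eigenvalues i : ℝ) : ℂ)))
      = Finset.univ.val.map (fun i => ((w i : ℝ) : ℂ)) := by
    have r1 := Polynomial.roots_multiset_prod_X_sub_C
      (Finset.univ.val.map (fun i => ((h.eigenvalues i : ℝ) : ℂ)))
    have r2 := Polynomial.roots_multiset_prod_X_sub_C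
      (Finset.univ.val.map (fun i => ((w i : ℝ) : ℂ)))
    rw [Multiset.map_map, ← Finset.prod_eq_multiset_prod] at r1 r2
    simp only [Function.comp_apply] at r1 r2
    rw [show (∏ i, ((X : ℂ[X]) - C ((h.eigenvalues i : ℝ) : ℂ))) = A.charpoly from h1.symm] at r1
    rw [show (∏ i, ((X : ℂ[X]) - C ((w i : ℝ) : ℂ))) = A.charpoly from h3.symm] at r2
    exact r1.symm.trans r2
  have h5 : (Finset.univ.val.map h.eigenvalues) = Finset.univ.val.map w := by
    have := congrArg (Multiset.map Complex.re) h4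
    simpa [Multiset.map_map, Function.comp] using this
  calc ∑ i, f (h.eigenvalues i)
      = ((Finset.univ.val.map h.eigenvalues).map f).sum := by
        rw [Finset.sum_eq_multiset_sum, Multiset.map_map]; rfl
    _ = ((Finset.univ.val.map w).map f).sum := by rw [h5]
    _ = ∑ i, f (w i) := by rw [Multiset.map_map, ← Finset.sum_eq_multiset_sum]; rfl

lemma my_traceNorm_diag {n : Type*} [Fintype n] [DecidableEq n] (w : n → ℝ) :
    traceNorm (Matrix.diagonal (fun i => (w i : ℂ))) = ∑ i, |w i| := by
  set A := Matrix.diagonal (fun i => (w i : ℂ)) with hA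
  have hAA : A.conjTranspose * A = Matrix.diagonal (fun i => ((w i ^ 2 : ℝ) : ℂ)) := by
    rw [hA, Matrix.diagonal_conjTranspose, Matrix.diagonal_mul_diagonal]
    congr 1; funext i; simp [Complex.conj_ofReal, pow_two]
  have key : ∀ (M : Matrix n n ℂ) (hM : M.IsHermitian),
      M = Matrix.diagonal (fun i => ((w i ^ 2 : ℝ) : ℂ)) →
      ∑ i, Real.sqrt (hM.eigenvalues i) = ∑ i, Real.sqrt (w i ^ 2) := by
    intro M hM hMe; subst hMe
    exact @my_eig_sum n _ _ (LinearOrder.lift' (Fintype.equivFin n) (Fintype.equivFin n).injective) _ hM _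
  unfold traceNorm
  rw [Matrix.trace_mul_comm, ← mul_assoc, Matrix.UnitaryGroup.star_mul_self, one_mul,
    Matrix.trace_diagonal]
  simp only [Function.comp_apply, ← Complex.ofReal_sum, Complex.ofReal_re]
  rw [key _ _ hAA]
  simp [Real.sqrt_sq_eq_abs]

lemma my_sum_ite {d : ℕ} (hd : 1 ≤ d) (a b : ℝ) :
    ∑ i : Fin d, (if i = (⟨0, by omega⟩ : Fin d) then a else b) = a + ((d : ℝ) - 1) * b := by
  set z : Fin d := ⟨0, by omega⟩
  rw [← Finset.add_sum_erase _ _ (Finset.mem_univ z), if_pos rfl]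
  congr 1
  rw [Finset.sum_congr rfl (fun i hi => if_neg (Finset.ne_of_mem_erase hi)),
    Finset.sum_const, Finset.card_erase_of_mem (Finset.mem_univ z), Finset.card_univ,
    Fintype.card_fin, nsmul_eq_mul, Nat.cast_sub hd, Nat.cast_one]

/-- Optimality of the uniform continuity bound for conditional entropy of
classical–quantum states: for every dimension and ε there is a saturating pair. -/
theorem cq_conditional_entropy_bound_saturated
    (dB : ℕ) (hdB : 2 ≤ dB) (ε : ℝ) (hε0 : 0 < ε) (hε1 : ε ≤ 1 - 1 / (dB : ℝ)) :
    ∃ (𝓧 : Type) (_ : Fintype 𝓧) (_ : DecidableEq 𝓧)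
      (r s : 𝓧 → ℝ) (ρ σ : 𝓧 → Matrix (Fin dB) (Fin dB) ℂ),
      (∀ x, 0 ≤ r x) ∧ (∑ x, r x = 1) ∧
      (∀ x, 0 ≤ s x) ∧ (∑ x, s x = 1) ∧
      (∀ x, IsDensityMatrix (ρ x)) ∧ (∀ x, IsDensityMatrix (σ x)) ∧
      (1 / 2) * traceNorm (cqState r ρ - cqState s σ) ≤ ε ∧
      |(∑ x, r x * vNEntropy (ρ x)) - ∑ x, s x * vNEntropy (σ x)| =
        ε * Real.logb 2 ((dB : ℝ) - 1) + binEntropy ε := by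
  have hd1 : 1 ≤ dB := by omega
  have hdR : (2 : ℝ) ≤ (dB : ℝ) := by exact_mod_cast hdB
  have hdpos : (0 : ℝ) < (dB : ℝ) := by linarith
  have hd1R : (1 : ℝ) ≤ (dB : ℝ) - 1 := by linarith
  have hd1pos : (0 : ℝ) < (dB : ℝ) - 1 := by linarith
  have hεlt : ε < 1 := lt_of_le_of_lt hε1 (by
    have : 0 < 1 / (dB : ℝ) := by positivity
    linarith)
  have h1ε : 0 < 1 - ε := by linarith
  set c : ℝ := ε / ((dB : ℝ) - 1) with hc
  have hcpos : 0 < c := by positivity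
  have hdc : ((dB : ℝ) - 1) * c = ε := by rw [hc]; field_simp [hd1pos.ne']
  set z : Fin dB := ⟨0, by omega⟩ with hz
  set w1 : Fin dB → ℝ := fun i => if i = z then 1 else 0 with hw1
  set w2 : Fin dB → ℝ := fun i => if i = z then 1 - ε else c with hw2
  refine ⟨Unit, inferInstance, inferInstance, fun _ => 1, fun _ => 1,
    fun _ => Matrix.diagonal (fun i => (w1 i : ℂ)),
    fun _ => Matrix.diagonal (fun i => (w2 i : ℂ)),
    fun _ => zero_le_one, by simp, fun _ => zero_le_one, by simp, ?_, ?_, ?_, ?_⟩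
  · intro x
    constructor
    · exact Matrix.PosSemidef.diagonal (fun i => Complex.zero_le_real.2 (by
        by_cases h : i = z <;> simp [hw1, h]))
    · rw [Matrix.trace_diagonal, ← Complex.ofReal_sum]
      norm_cast
      rw [hw1, my_sum_ite hd1]
      ring
  · intro x
    constructor
    · exact Matrix.PosSemidef.diagonal (fun i => Complex.zero_le_real.2 (by
        by_cases h : i = z <;> simp [hw2, h, h1ε.le, hcpos.le]))
    · rw [Matrix.trace_diagonal, ← Complex.ofReal_sum]
      norm_cast
      rw [hw2, my_sum_ite hd1]
      linarith [hdc]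
  · -- trace norm bound
    have hM : cqState (fun _ : Unit => (1 : ℝ)) (fun _ => Matrix.diagonal (fun i => (w1 i : ℂ)))
        - cqState (fun _ : Unit => (1 : ℝ)) (fun _ => Matrix.diagonal (fun i => (w2 i : ℂ)))
        = Matrix.diagonal (fun p : Unit × Fin dB => ((w1 p.2 - w2 p.2 : ℝ) : ℂ)) := by
      ext p q
      simp only [Matrix.sub_apply, cqState, Matrix.of_apply, Matrix.diagonal_apply]
      have hpq1 : p.1 = q.1 := rfl
      by_cases h2 : p.2 = q.2
      · have : p = q := Prod.ext hpq1 h2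
        simp [this]
      · have : ¬ p = q := fun h => h2 (congrArg Prod.snd h)
        simp [hpq1, this, h2]
    rw [hM, my_traceNorm_diag]
    have hsum : ∑ p : Unit × Fin dB, |w1 p.2 - w2 p.2| = ∑ i : Fin dB, |w1 i - w2 i| := by
      rw [Fintype.sum_prod_type]
      simp
    rw [hsum]
    have habs : ∀ i : Fin dB, |w1 i - w2 i| = if i = z then ε else c := by
      intro i
      by_cases h : i = z
      · simp [hw1, hw2, h, abs_of_pos hε0]
      · simp only [hw1, hw2, if_neg h]
        rw [zero_sub, abs_neg, abs_of_pos hcpos]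
    rw [Finset.sum_congr rfl (fun i _ => habs i), my_sum_ite hd1, hdc]
    linarith
  · -- entropy difference
    have hherm1 : (Matrix.diagonal (fun i => (w1 i : ℂ))).IsHermitian :=
      Matrix.isHermitian_diagonal_of_self_adjoint _ (by
        funext i; simp [Complex.star_def, Complex.conj_ofReal])
    have hherm2 : (Matrix.diagonal (fun i => (w2 i : ℂ))).IsHermitian :=
      Matrix.isHermitian_diagonal_of_self_adjoint _ (by
        funext i; simp [Complex.star_def, Complex.conj_ofReal])
    have hent1 : vNEntropy (Matrix.diagonal (fun i => (w1 i : ℂ))) = 0 := by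
      rw [vNEntropy, dif_pos hherm1,
        my_eig_sum hherm1 (fun x => x * Real.logb 2 x)]
      have : ∀ i : Fin dB, w1 i * Real.logb 2 (w1 i) = if i = z then 0 else 0 := by
        intro i; by_cases h : i = z <;> simp [hw1, h]
      rw [Finset.sum_congr rfl (fun i _ => this i), my_sum_ite hd1]
      ring
    have hent2 : vNEntropy (Matrix.diagonal (fun i => (w2 i : ℂ)))
        = ε * Real.logb 2 ((dB : ℝ) - 1) + binEntropy ε := by
      rw [vNEntropy, dif_pos hherm2,
        my_eig_sum hherm2 (fun x => x * Real.logb 2 x)]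
      have : ∀ i : Fin dB, w2 i * Real.logb 2 (w2 i)
          = if i = z then (1 - ε) * Real.logb 2 (1 - ε) else c * Real.logb 2 c := by
        intro i; by_cases h : i = z <;> simp [hw2, h]
      rw [Finset.sum_congr rfl (fun i _ => this i), my_sum_ite hd1]
      have hlogc : Real.logb 2 c = Real.logb 2 ε - Real.logb 2 ((dB : ℝ) - 1) :=
        Real.logb_div hε0.ne' hd1pos.ne'
      rw [binEntropy]
      rw [show ((dB : ℝ) - 1) * (c * Real.logb 2 c) = (((dB : ℝ) - 1) * c) * Real.logb 2 c by ring,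
        hdc, hlogc]
      ring
    have hRHS : 0 ≤ ε * Real.logb 2 ((dB : ℝ) - 1) + binEntropy ε := by
      have h1 : 0 ≤ Real.logb 2 ((dB : ℝ) - 1) := Real.logb_nonneg one_lt_two hd1R
      have h2 : Real.logb 2 ε ≤ 0 := Real.logb_nonpos one_lt_two hε0.le hεlt.le
      have h3 : Real.logb 2 (1 - ε) ≤ 0 := Real.logb_nonpos one_lt_two h1ε.le (by linarith)
      have : 0 ≤ binEntropy ε := by
        rw [binEntropy]
        nlinarith
      nlinarith
    simp only [Finset.univ_unique, Finset.sum_singleton, one_mul, hent1, hent2]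
    rw [zero_sub, abs_neg, abs_of_nonneg hRHS]
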